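/- Suppose T satisfies the cyclic condition (C3) with βₙ(x,y) ∈ (0,1] and βₙ(x,y) → 1, αₙ(x,y) ∈ [1,∞) with αₙ(x,y) → 1, and μₙ(x,y) ∈ [−1,(1−βₙ)/(2βₙ)) with μₙ(x,y) → −1 as n → ∞ (i.e. T is a cyclic asymptotically pseudocontractive mapping in the intermediate sense). Then T is asymptotically nonexpansive: for every (x,y) ∈ (A×B) ∪ (B×A) the limit lim_{n→∞} d(Tⁿx,Tⁿy) exists and lies in [D, d(x,y)]. (Theorem 3.5(iv).) -/

import Mathlib

open Filter Topology

/-- Theorem 3.5(iv): if `T` satisfies (C3) with `βₙ(x,y) ∈ (0,1]`, `βₙ → 1`,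
`αₙ(x,y) ∈ [1,∞)` with `αₙ → 1`, and `μₙ(x,y) → -1` (cyclic asymptotically
pseudocontractive in the intermediate sense), then `T` is asymptotically
nonexpansive: `lim_n d(Tⁿx,Tⁿy)` exists in `[D, d(x,y)]` for every pair
`(x,y) ∈ (A×B) ∪ (B×A)`. -/
theorem thm3_5_iv {X : Type*} [NormedAddCommGroup X] [NormedSpace ℝ X]
    [UniformConvexSpace X] [CompleteSpace X]
    (A B : Set X) (hA : A.Nonempty) (hB : B.Nonempty)
    (hAc : IsClosed A) (hBc : IsClosed B) (hAconv : Convex ℝ A) (hBconv : Convex ℝ B)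
    (T : X → X) (hTA : Set.MapsTo T A B) (hTB : Set.MapsTo T B A)
    (D : ℝ) (hD : D = sInf (Set.image2 dist A B))
    (α β μ γ ξ : ℕ → X → X → ℝ)
    (hα : ∀ n x y, (x ∈ A ∧ y ∈ B) ∨ (x ∈ B ∧ y ∈ A) → 0 ≤ α n x y)
    (hβ : ∀ n x y, (x ∈ A ∧ y ∈ B) ∨ (x ∈ B ∧ y ∈ A) → 0 < β n x y ∧ β n x y ≤ 1)
    (hμ : ∀ n x y, (x ∈ A ∧ y ∈ B) ∨ (x ∈ B ∧ y ∈ A) →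
      -1 ≤ μ n x y ∧ μ n x y < (1 - β n x y) / (2 * β n x y))
    (hγ : ∀ n x y, (x ∈ A ∧ y ∈ B) ∨ (x ∈ B ∧ y ∈ A) → 0 ≤ γ n x y)
    (hξdef : ∀ n x y, (x ∈ A ∧ y ∈ B) ∨ (x ∈ B ∧ y ∈ A) → ξ n x y =
      max 0 ((1 - β n x y * (1 + 2 * μ n x y)) * dist (T^[n] x) (T^[n] y) ^ 2
        - (α n x y + β n x y) * dist x y ^ 2))
    (hineq : ∀ n x y, (x ∈ A ∧ y ∈ B) ∨ (x ∈ B ∧ y ∈ A) →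
      dist (T^[n] x) (T^[n] y) ^ 2 ≤
        α n x y * dist x y ^ 2
        + β n x y * (dist x y ^ 2 + dist (T^[n] x) (T^[n] y) ^ 2)
        + 2 * μ n x y * β n x y * dist (T^[n] x) (T^[n] y) ^ 2
        + ξ n x y + γ n x y * D ^ 2)
    (hξ0 : ∀ x y, (x ∈ A ∧ y ∈ B) ∨ (x ∈ B ∧ y ∈ A) → Tendsto (fun n => ξ n x y) atTop (nhds 0))
    (hγ0 : ∀ x y, (x ∈ A ∧ y ∈ B) ∨ (x ∈ B ∧ y ∈ A) → Tendsto (fun n => γ n x y) atTop (nhds 0))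
    (hK2 : ∀ n x y, (x ∈ A ∧ y ∈ B) ∨ (x ∈ B ∧ y ∈ A) →
      (1 - α n x y - 2 * β n x y) / (2 * β n x y) ≤ μ n x y)
    (hK3 : ∀ x y, (x ∈ A ∧ y ∈ B) ∨ (x ∈ B ∧ y ∈ A) →
      Tendsto (fun n => α n x y + 2 * β n x y * (1 + μ n x y)) atTop (nhds 1))
    (hβlim : ∀ x y, (x ∈ A ∧ y ∈ B) ∨ (x ∈ B ∧ y ∈ A) → Tendsto (fun n => β n x y) atTop (nhds 1))
    (hα1 : ∀ n x y, (x ∈ A ∧ y ∈ B) ∨ (x ∈ B ∧ y ∈ A) → 1 ≤ α n x y)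
    (hαlim : ∀ x y, (x ∈ A ∧ y ∈ B) ∨ (x ∈ B ∧ y ∈ A) → Tendsto (fun n => α n x y) atTop (nhds 1))
    (hμlim : ∀ x y, (x ∈ A ∧ y ∈ B) ∨ (x ∈ B ∧ y ∈ A) → Tendsto (fun n => μ n x y) atTop (nhds (-1))) :
    ∀ x y : X, (x ∈ A ∧ y ∈ B) ∨ (x ∈ B ∧ y ∈ A) →
      ∃ L : ℝ, Tendsto (fun n => dist (T^[n] x) (T^[n] y)) atTop (nhds L) ∧
        D ≤ L ∧ L ≤ dist x y := by
  intro x y hxy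
  -- membership of iterates
  have hmem : ∀ n : ℕ, (T^[n] x ∈ A ∧ T^[n] y ∈ B) ∨ (T^[n] x ∈ B ∧ T^[n] y ∈ A) := by
    intro n
    induction n with
    | zero => simpa using hxy
    | succ n ih =>
      rw [Function.iterate_succ_apply', Function.iterate_succ_apply']
      rcases ih with ⟨h1, h2⟩ | ⟨h1, h2⟩
      · exact Or.inr ⟨hTA h1, hTB h2⟩
      · exact Or.inl ⟨hTB h1, hTA h2⟩
  have hSbdd : BddBelow (Set.image2 dist A B) := by
    refine ⟨0, ?_⟩
    rintro z ⟨a, ha, b, hb, rfl⟩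
    exact dist_nonneg
  have hDle : ∀ u v : X, (u ∈ A ∧ v ∈ B) ∨ (u ∈ B ∧ v ∈ A) → D ≤ dist u v := by
    intro u v huv
    rcases huv with ⟨hu, hv⟩ | ⟨hu, hv⟩
    · rw [hD]; exact csInf_le hSbdd ⟨u, hu, v, hv, rfl⟩
    · rw [hD, dist_comm]; exact csInf_le hSbdd ⟨v, hv, u, hu, rfl⟩
  -- key eventual contraction for any admissible pair
  have key : ∀ u v : X, (u ∈ A ∧ v ∈ B) ∨ (u ∈ B ∧ v ∈ A) → ∀ ε : ℝ, 0 < ε →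
      ∀ᶠ n in atTop, dist (T^[n] u) (T^[n] v) ≤ dist u v + ε := by
    intro u v huv ε hε
    have hc : ∀ n : ℕ, 0 < 1 - β n u v * (1 + 2 * μ n u v) := by
      intro n
      have hb := hβ n u v huv
      have hm := (hμ n u v huv).2
      have h2b : 0 < 2 * β n u v := by linarith [hb.1]
      have h := (lt_div_iff₀ h2b).mp hm
      nlinarith [hb.1]
    have hbound : ∀ n : ℕ, dist (T^[n] u) (T^[n] v) ^ 2 ≤
        ((α n u v + β n u v) * dist u v ^ 2 + ξ n u v + γ n u v * D ^ 2)
        / (1 - β n u v * (1 + 2 * μ n u v)) := by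
      intro n
      rw [le_div_iff₀ (hc n)]
      have h := hineq n u v huv
      nlinarith [h]
    have hnum : Tendsto (fun n => (α n u v + β n u v) * dist u v ^ 2 + ξ n u v
        + γ n u v * D ^ 2) atTop (nhds (2 * dist u v ^ 2)) := by
      have h1 := (((hαlim u v huv).add (hβlim u v huv)).mul_const (dist u v ^ 2)).add
        (hξ0 u v huv)
      have h2 := h1.add ((hγ0 u v huv).mul_const (D ^ 2))
      have he : (1 + 1) * dist u v ^ 2 + 0 + 0 * D ^ 2 = 2 * dist u v ^ 2 := by ring
      rw [← he]; exact h2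
    have hden : Tendsto (fun n => 1 - β n u v * (1 + 2 * μ n u v)) atTop (nhds 2) := by
      have hm := ((hμlim u v huv).const_mul 2).const_add 1
      have h := (tendsto_const_nhds (α := ℕ) (x := (1:ℝ))).sub ((hβlim u v huv).mul hm)
      have : (1 : ℝ) - 1 * (1 + 2 * (-1)) = 2 := by ring
      simpa [this] using h
    have hlim : Tendsto (fun n => ((α n u v + β n u v) * dist u v ^ 2 + ξ n u v
        + γ n u v * D ^ 2) / (1 - β n u v * (1 + 2 * μ n u v))) atTop
        (nhds (dist u v ^ 2)) := by
      have h := hnum.div hden (by norm_num)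
      have : 2 * dist u v ^ 2 / 2 = dist u v ^ 2 := by ring
      rw [this] at h; exact h
    have hlt : dist u v ^ 2 < (dist u v + ε) ^ 2 := by
      nlinarith [dist_nonneg (x := u) (y := v)]
    filter_upwards [hlim.eventually_lt_const hlt] with n hn
    have h1 := (hbound n).trans_lt hn
    nlinarith [dist_nonneg (x := T^[n] u) (y := T^[n] v),
      dist_nonneg (x := u) (y := v)]
  set dd : ℕ → ℝ := fun n => dist (T^[n] x) (T^[n] y) with hdd
  have hd0 : dd 0 = dist x y := by simp [hdd]
  have hdD : ∀ n, D ≤ dd n := fun n => hDle _ _ (hmem n)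
  have hdnn : ∀ n, 0 ≤ dd n := fun n => dist_nonneg
  have hshift : ∀ (m : ℕ) (ε : ℝ), 0 < ε → ∀ᶠ k in atTop, dd k ≤ dd m + ε := by
    intro m ε hε
    have h := key (T^[m] x) (T^[m] y) (hmem m) ε hε
    rw [eventually_atTop] at h ⊢
    obtain ⟨N, hN⟩ := h
    refine ⟨N + m, fun k hk => ?_⟩
    have h2 := hN (k - m) (by omega)
    rw [← Function.iterate_add_apply, ← Function.iterate_add_apply] at h2
    have hkm : k - m + m = k := by omega
    rw [hkm] at h2
    exact h2
  have hbddR : BddBelow (Set.range dd) := ⟨0, by rintro z ⟨n, rfl⟩; exact hdnn n⟩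
  set L : ℝ := ⨅ m, dd m with hL
  have hLle : ∀ m, L ≤ dd m := fun m => ciInf_le hbddR m
  have hleL : D ≤ L := le_ciInf hdD
  have hbddAbove : IsBoundedUnder (· ≤ ·) atTop dd := by
    refine ⟨dd 0 + 1, ?_⟩
    exact hshift 0 1 one_pos
  have hbddBelow : IsBoundedUnder (· ≥ ·) atTop dd :=
    Filter.isBoundedUnder_of ⟨0, hdnn⟩
  have hliminf : L ≤ liminf dd atTop :=
    le_liminf_of_le hbddAbove.isCoboundedUnder_ge (Filter.Eventually.of_forall hLle)
  have hlimsup : limsup dd atTop ≤ L := by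
    refine le_ciInf fun m => ?_
    refine le_of_forall_pos_le_add fun ε hε => ?_
    exact limsup_le_of_le hbddBelow.isCoboundedUnder_le (hshift m ε hε)
  refine ⟨L, ?_, hleL, ?_⟩
  · exact tendsto_of_le_liminf_of_limsup_le hliminf hlimsup hbddAbove hbddBelow
  · rw [← hd0]; exact hLle 0
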